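/- arXiv:0911.2203 — 5 statements merged into one kernel-verified Lean document; each statement's English description precedes it below -/
import Mathlib

section
/- Every tropical polynomial function factors into linear tropical factors (the tropical semifield is algebraically closed): let d ≥ 1, let S be a subset of {0,1,…,d} containing 0 and d, and let a : S → ℝ. Then there exist real numbers r₁ ≤ r₂ ≤ … ≤ r_d such that for all x ∈ ℝ, max_{i∈S}(a_i + i·x) = a_d + Σ_{j=1}^{d} max(x, r_j). -/
private theorem trop_aux : ∀ (d : ℕ), 1 ≤ d → ∀ (S : Finset ℕ), S ⊆ Finset.range (d + 1) →
    ∀ (h0 : (0:ℕ) ∈ S), d ∈ S → ∀ a : ℕ → ℝ,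
    ∃ r : Fin d → ℝ, Monotone r ∧
      ∀ x : ℝ, S.sup' ⟨0, h0⟩ (fun i => a i + (i : ℝ) * x)
        = a d + ∑ j : Fin d, max x (r j) := by
  intro d hd
  induction d, hd using Nat.le_induction with
  | base =>
    intro S hS h0 h1 a
    have hSeq : S = {0, 1} := by
      apply Finset.Subset.antisymm
      · intro i hi
        have := hS hi
        simp only [Finset.mem_range] at this
        interval_cases i <;> simp
      · intro i hi
        simp only [Finset.mem_insert, Finset.mem_singleton] at hi
        rcases hi with rfl | rfl <;> assumption
    subst hSeq
    refine ⟨fun _ => a 0 - a 1, monotone_const, fun x => ?_⟩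
    rw [show ({0,1} : Finset ℕ).sup' ⟨0,h0⟩ (fun i => a i + (i:ℝ)*x)
        = (a 0 + (0:ℕ)*x) ⊔ (a 1 + (1:ℕ)*x) from by
      rw [Finset.sup'_insert, Finset.sup'_singleton]; exact Finset.singleton_nonempty 1]
    simp only [Fin.sum_univ_one, Nat.cast_zero, Nat.cast_one, zero_mul, one_mul, add_zero]
    rcases le_total x (a 0 - a 1) with h | h
    · rw [max_eq_left (by linarith : a 1 + x ≤ a 0), max_eq_right h]
      ring
    · rw [max_eq_right (by linarith : a 0 ≤ a 1 + x), max_eq_left h]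
  | succ d hd ih =>
    intro S hS h0 hdS a
    set T : Finset ℕ := S.erase (d+1) with hT
    have h0T : (0:ℕ) ∈ T := Finset.mem_erase.2 ⟨by omega, h0⟩
    have hTne : T.Nonempty := ⟨0, h0T⟩
    have hTle : ∀ i ∈ T, i ≤ d := by
      intro i hi
      have h1 := Finset.mem_erase.1 hi
      have h2 := hS h1.2
      simp only [Finset.mem_range] at h2
      omega
    have hTpos : ∀ i ∈ T, (0:ℝ) < (d:ℝ) + 1 - i := by
      intro i hi
      have h1 : (i:ℝ) ≤ d := by exact_mod_cast hTle i hi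
      linarith
    set R : ℝ := T.sup' hTne (fun i => (a i - a (d+1)) / ((d:ℝ) + 1 - i)) with hR
    have hRge : ∀ i ∈ T, a i - a (d+1) ≤ R * ((d:ℝ) + 1 - i) := by
      intro i hi
      have hle := Finset.le_sup' (fun i => (a i - a (d+1)) / ((d:ℝ) + 1 - i)) hi
      rw [← hR, div_le_iff₀ (hTpos i hi)] at hle
      linarith
    obtain ⟨k, hkT, hkR⟩ := Finset.exists_mem_eq_sup' hTne
      (fun i => (a i - a (d+1)) / ((d:ℝ) + 1 - i))
    have hkdR : (k:ℝ) ≤ d := by exact_mod_cast hTle k hkT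
    have hkeq : R * ((d:ℝ) + 1 - k) = a k - a (d+1) := by
      rw [hR, hkR, div_mul_cancel₀]
      exact ne_of_gt (hTpos k hkT)
    set b : ℕ → ℝ := fun i => if i = d then a (d + 1) else a i - R with hb
    have hbd : b d = a (d + 1) := by simp [hb]
    have hbi : ∀ i : ℕ, i ≠ d → b i = a i - R := by
      intro i hi; simp [hb, hi]
    set S' : Finset ℕ := insert d T with hS'
    have h0S' : (0:ℕ) ∈ S' := Finset.mem_insert_of_mem h0T
    have hdS' : d ∈ S' := Finset.mem_insert_self d T
    have hS'sub : S' ⊆ Finset.range (d+1) := by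
      intro i hi
      rcases Finset.mem_insert.1 hi with rfl | hi
      · simp
      · exact Finset.mem_range.2 (Nat.lt_succ_of_le (hTle i hi))
    obtain ⟨r', hr'mono, hr'⟩ := ih S' hS'sub h0S' hdS' b
    -- Claim A: for x ≥ R, Q(x) = b d + d x
    have QA : ∀ x : ℝ, R ≤ x →
        S'.sup' ⟨0, h0S'⟩ (fun i => b i + (i:ℝ) * x) = a (d+1) + (d:ℝ) * x := by
      intro x hx
      apply le_antisymm
      · apply Finset.sup'_le
        intro i hi
        by_cases hid : i = d
        · rw [hid, hbd]
        · have hiT : i ∈ T := by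
            rcases Finset.mem_insert.1 hi with h | h
            · exact absurd h hid
            · exact h
          have h1 := hRge i hiT
          have h3 : (i:ℝ) ≤ d := by exact_mod_cast hTle i hiT
          have h4 : ((d:ℝ) - i) * R ≤ ((d:ℝ) - i) * x :=
            mul_le_mul_of_nonneg_left hx (by linarith)
          rw [hbi i hid]
          nlinarith
      · have := Finset.le_sup' (fun i => b i + (i:ℝ) * x) hdS'
        rw [hbd] at this
        exact this
    -- Claim B: for x ≥ R, P(x) = a (d+1) + (d+1) x
    have QB : ∀ x : ℝ, R ≤ x →
        S.sup' ⟨0, h0⟩ (fun i => a i + (i:ℝ) * x) = a (d+1) + ((d:ℝ)+1) * x := by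
      intro x hx
      apply le_antisymm
      · apply Finset.sup'_le
        intro i hi
        by_cases hid : i = d + 1
        · rw [hid]; push_cast; linarith
        · have hiT : i ∈ T := Finset.mem_erase.2 ⟨hid, hi⟩
          have h1 := hRge i hiT
          have h3 : (i:ℝ) ≤ d := by exact_mod_cast hTle i hiT
          have h4 : ((d:ℝ) + 1 - i) * R ≤ ((d:ℝ) + 1 - i) * x :=
            mul_le_mul_of_nonneg_left hx (by linarith)
          nlinarith
      · have := Finset.le_sup' (fun i => a i + (i:ℝ) * x) hdS
        push_cast at this ⊢
        linarith
    -- Claim C: for x ≤ R, P(x) = R + Q(x)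
    have QC : ∀ x : ℝ, x ≤ R →
        S.sup' ⟨0, h0⟩ (fun i => a i + (i:ℝ) * x)
          = R + S'.sup' ⟨0, h0S'⟩ (fun i => b i + (i:ℝ) * x) := by
      intro x hx
      have hdtop : b d + (d:ℝ) * x ≤ S'.sup' ⟨0, h0S'⟩ (fun i => b i + (i:ℝ) * x) :=
        Finset.le_sup' (fun i => b i + (i:ℝ) * x) hdS'
      rw [hbd] at hdtop
      apply le_antisymm
      · apply Finset.sup'_le
        intro i hi
        by_cases hid1 : i = d + 1
        · rw [hid1]; push_cast; linarith
        · have hiT : i ∈ T := Finset.mem_erase.2 ⟨hid1, hi⟩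
          by_cases hid : i = d
          · have h2 := hRge i hiT
            have hc : (i:ℝ) = d := by exact_mod_cast congrArg (Nat.cast : ℕ → ℝ) hid
            have h5 : R * ((d:ℝ) + 1 - i) = R := by rw [hc]; ring
            rw [← hc] at hdtop
            linarith
          · have h1 : b i + (i:ℝ) * x ≤ S'.sup' ⟨0, h0S'⟩ (fun i => b i + (i:ℝ) * x) :=
              Finset.le_sup' (fun i => b i + (i:ℝ) * x) (Finset.mem_insert_of_mem hiT)
            rw [hbi i hid] at h1
            linarith
      · have hsle : S'.sup' ⟨0, h0S'⟩ (fun i => b i + (i:ℝ) * x)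
            ≤ S.sup' ⟨0, h0⟩ (fun i => a i + (i:ℝ) * x) - R := by
          apply Finset.sup'_le
          intro i hi
          have hk : a k + (k:ℝ) * x ≤ S.sup' ⟨0, h0⟩ (fun i => a i + (i:ℝ) * x) :=
            Finset.le_sup' (fun i => a i + (i:ℝ) * x) (Finset.mem_of_mem_erase hkT)
          have h4 : ((d:ℝ) - k) * x ≤ ((d:ℝ) - k) * R :=
            mul_le_mul_of_nonneg_left hx (by linarith)
          by_cases hid : i = d
          · have hc : (i:ℝ) = d := by exact_mod_cast congrArg (Nat.cast : ℕ → ℝ) hid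
            rw [hid, hbd]
            linarith
          · have hiT : i ∈ T := by
              rcases Finset.mem_insert.1 hi with h | h
              · exact absurd h hid
              · exact h
            have h1 : a i + (i:ℝ) * x ≤ S.sup' ⟨0, h0⟩ (fun i => a i + (i:ℝ) * x) :=
              Finset.le_sup' (fun i => a i + (i:ℝ) * x) (Finset.mem_of_mem_erase hiT)
            rw [hbi i hid]
            linarith
        linarith
    -- roots of r' are ≤ R
    have hroots : ∀ j : Fin d, r' j ≤ R := by
      have h1 := hr' R
      rw [QA R le_rfl, hbd] at h1
      have h2 : ∑ j : Fin d, (max R (r' j) - R) = 0 := by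
        rw [Finset.sum_sub_distrib, Finset.sum_const, Finset.card_univ, Fintype.card_fin,
          nsmul_eq_mul]
        linarith
      intro j
      have h3 := (Finset.sum_eq_zero_iff_of_nonneg
        (fun j _ => sub_nonneg.2 (le_max_left R (r' j)))).1 h2 j (Finset.mem_univ j)
      have h4 : max R (r' j) = R := by linarith
      exact max_eq_left_iff.1 h4
    -- assemble
    set r : Fin (d+1) → ℝ := fun j => if h : (j:ℕ) < d then r' ⟨j, h⟩ else R with hrdef
    have hrcast : ∀ j : Fin d, r (Fin.castSucc j) = r' j := by
      intro j
      have hlt : ((Fin.castSucc j : Fin (d+1)) : ℕ) < d := by simp [Fin.is_lt]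
      simp only [hrdef]
      rw [dif_pos hlt]
      exact congrArg r' (Fin.ext (by simp))
    have hrlast : r (Fin.last d) = R := by
      simp only [hrdef]
      rw [dif_neg (by simp)]
    have hrleR : ∀ j : Fin (d+1), r j ≤ R := by
      intro j
      by_cases h : (j:ℕ) < d
      · simp only [hrdef]; rw [dif_pos h]; exact hroots _
      · simp only [hrdef]; rw [dif_neg h]
    refine ⟨r, ?_, ?_⟩
    · intro i j hij
      by_cases hi : (i:ℕ) < d
      · by_cases hj : (j:ℕ) < d
        · simp only [hrdef]
          rw [dif_pos hi, dif_pos hj]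
          exact hr'mono (show (⟨(i:ℕ), hi⟩ : Fin d) ≤ ⟨(j:ℕ), hj⟩ from hij)
        · simp only [hrdef]
          rw [dif_pos hi, dif_neg hj]
          exact hroots _
      · have hj : ¬ (j:ℕ) < d := by
          have : (i:ℕ) ≤ (j:ℕ) := hij
          omega
        simp only [hrdef]
        rw [dif_neg hi, dif_neg hj]
    · intro x
      have hsplit : ∑ j : Fin (d+1), max x (r j)
          = (∑ j : Fin d, max x (r' j)) + max x R := by
        rw [Fin.sum_univ_castSucc]
        congr 1
        · exact Finset.sum_congr rfl (fun j _ => by rw [hrcast j])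
        · rw [hrlast]
      rw [hsplit]
      rcases le_total x R with hx | hx
      · rw [QC x hx, hr' x, hbd, max_eq_right hx]
        ring
      · rw [QB x hx, max_eq_left hx]
        have heach : ∀ j : Fin d, max x (r' j) = x :=
          fun j => max_eq_left (le_trans (hroots j) hx)
        rw [Finset.sum_congr rfl (fun j _ => heach j), Finset.sum_const, Finset.card_univ,
          Fintype.card_fin, nsmul_eq_mul]
        ring

/-- The tropical semifield is algebraically closed: every tropical polynomial
function `x ↦ max_{i ∈ S} (a i + i·x)` of degree `d` factors as the tropical
product of the constant `a d` and `d` tropical linear factors `max x (r j)`,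
with ordered roots `r 1 ≤ … ≤ r d`. -/
theorem tropical_fundamental_theorem (d : ℕ) (hd : 1 ≤ d) (S : Finset ℕ)
    (hS : S ⊆ Finset.range (d + 1)) (h0 : (0 : ℕ) ∈ S) (hdS : d ∈ S) (a : ℕ → ℝ) :
    ∃ r : Fin d → ℝ, Monotone r ∧
      ∀ x : ℝ, S.sup' ⟨0, h0⟩ (fun i => a i + (i : ℝ) * x)
        = a d + ∑ j : Fin d, max x (r j) :=
  trop_aux d hd S hS h0 hdS a
end

section
/- A point x₀ is a tropical root of order at least k if and only if the polynomial factors by the k-th tropical power of "x + x₀": let d ≥ 1, 1 ≤ k ≤ d, a : {0,…,d} → ℝ, P(x) = max_{0≤i≤d}(a_i + i·x), and x₀ ∈ ℝ. Then the following are equivalent: (1) there exist indices i < j with j − i ≥ k such that a_i + i·x₀ = a_j + j·x₀ = P(x₀); (2) there exist b₀,…,b_{d−k} ∈ ℝ such that for all x ∈ ℝ, P(x) = k·max(x, x₀) + max_{0≤j≤d−k}(b_j + j·x). -/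
/-- `x₀` is a tropical root of order at least `k` of the tropical polynomial
`P(x) = max_{0 ≤ i ≤ d} (a i + i·x)` (i.e. the maximum at `x₀` is attained by two
indices at distance at least `k`) if and only if `P` factors tropically as
`(x + x₀)^k · Q(x)` with `Q` a tropical polynomial of degree `d - k`. -/
theorem tropical_root_order_iff_factor (d k : ℕ) (hd : 1 ≤ d) (hk1 : 1 ≤ k) (hkd : k ≤ d)
    (a : ℕ → ℝ) (x₀ : ℝ) :
    (∃ i j : ℕ, i < j ∧ j ≤ d ∧ k ≤ j - i ∧
        a i + (i : ℝ) * x₀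
          = (Finset.range (d + 1)).sup' Finset.nonempty_range_add_one
              (fun m => a m + (m : ℝ) * x₀) ∧
        a j + (j : ℝ) * x₀
          = (Finset.range (d + 1)).sup' Finset.nonempty_range_add_one
              (fun m => a m + (m : ℝ) * x₀)) ↔
    (∃ b : ℕ → ℝ, ∀ x : ℝ,
        (Finset.range (d + 1)).sup' Finset.nonempty_range_add_one
            (fun m => a m + (m : ℝ) * x)
          = (k : ℝ) * max x x₀
            + (Finset.range (d - k + 1)).sup' Finset.nonempty_range_add_one
                (fun j => b j + (j : ℝ) * x)) := by
  classical
  constructor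
  · rintro h
    obtain ⟨i, j, hij, hjd, hk', hi, hj⟩ := h
    have hikj : i + k ≤ j := by omega
    set Pm := (Finset.range (d + 1)).sup' Finset.nonempty_range_add_one
        (fun m => a m + (m : ℝ) * x₀) with hPm
    have hPle : ∀ m, m ≤ d → a m + (m : ℝ) * x₀ ≤ Pm := by
      intro m hm
      exact Finset.le_sup' (fun m => a m + (m : ℝ) * x₀)
        (Finset.mem_range.mpr (by omega))
    set b : ℕ → ℝ := fun m =>
      if m + k ≤ j then
        (if i ≤ m then max (a m - (k : ℝ) * x₀) (a (m + k)) else a m - (k : ℝ) * x₀)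
      else a (m + k) with hbdef
    refine ⟨b, fun x => ?_⟩
    have hbA : ∀ m, m + k ≤ j → a m - (k : ℝ) * x₀ ≤ b m := by
      intro m hm
      simp only [hbdef]
      rw [if_pos hm]
      split_ifs with h2
      · exact le_max_left _ _
      · exact le_rfl
    have hbB : ∀ m, i ≤ m → a (m + k) ≤ b m := by
      intro m hm
      simp only [hbdef]
      rw [if_pos hm]
      split_ifs with h1
      · exact le_max_right _ _
      · exact le_rfl
    set Qx := (Finset.range (d - k + 1)).sup' Finset.nonempty_range_add_one
        (fun m => b m + (m : ℝ) * x) with hQx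
    have hQle : ∀ m, m ≤ d - k → b m + (m : ℝ) * x ≤ Qx := by
      intro m hm
      exact Finset.le_sup' (fun m => b m + (m : ℝ) * x)
        (Finset.mem_range.mpr (by omega))
    have hk0 : (0 : ℝ) ≤ (k : ℝ) := Nat.cast_nonneg k
    have hmaxx : (k : ℝ) * x ≤ (k : ℝ) * max x x₀ :=
      mul_le_mul_of_nonneg_left (le_max_left x x₀) hk0
    have hmaxx0 : (k : ℝ) * x₀ ≤ (k : ℝ) * max x x₀ :=
      mul_le_mul_of_nonneg_left (le_max_right x x₀) hk0
    have hxle : ∀ m, m + k ≤ j → a m + (m : ℝ) * x ≤ (k : ℝ) * max x x₀ + Qx := by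
      intro m hm
      have h1 := hbA m hm
      have h2 := hQle m (by omega)
      linarith
    have hxge : ∀ m, i ≤ m → m + k ≤ d →
        a (m + k) + ((m + k : ℕ) : ℝ) * x ≤ (k : ℝ) * max x x₀ + Qx := by
      intro m hm hmd
      have h1 := hbB m hm
      have h2 := hQle m (by omega)
      have hc : ((m + k : ℕ) : ℝ) = (m : ℝ) + (k : ℝ) := by push_cast; ring
      rw [hc]
      have hr : ((m : ℝ) + (k : ℝ)) * x = (m : ℝ) * x + (k : ℝ) * x := by ring
      linarith
    apply le_antisymm
    · apply Finset.sup'_le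
      intro m hmr
      have hmd : m ≤ d := by
        have := Finset.mem_range.mp hmr; omega
      rcases le_total x x₀ with hx | hx
      · by_cases hc : m + k ≤ j
        · exact hxle m hc
        · have him : i ≤ m := by omega
          have e1 : a m + (m : ℝ) * x₀ ≤ Pm := hPle m hmd
          have e2 : (m : ℝ) * (x - x₀) ≤ (i : ℝ) * (x - x₀) := by
            apply mul_le_mul_of_nonpos_right _ (by linarith)
            exact_mod_cast him
          have e3 := hxle i (by omega)
          have r1 : a m + (m : ℝ) * x = (a m + (m : ℝ) * x₀) + (m : ℝ) * (x - x₀) := by ring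
          have r2 : a i + (i : ℝ) * x = (a i + (i : ℝ) * x₀) + (i : ℝ) * (x - x₀) := by ring
          have e4 : a i + (i : ℝ) * x₀ = Pm := hi
          linarith
      · by_cases hc : i + k ≤ m
        · obtain ⟨m', rfl⟩ : ∃ m', m = m' + k := ⟨m - k, by omega⟩
          exact hxge m' (by omega) (by omega)
        · obtain ⟨j', hj'⟩ : ∃ j', j = j' + k := ⟨j - k, by omega⟩
          have e4 : a j + (j : ℝ) * x ≤ (k : ℝ) * max x x₀ + Qx := by
            have := hxge j' (by omega) (by omega)
            rw [← hj'] at this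
            exact this
          have e1 : a m + (m : ℝ) * x₀ ≤ Pm := hPle m hmd
          have e2 : (m : ℝ) * (x - x₀) ≤ (j : ℝ) * (x - x₀) := by
            apply mul_le_mul_of_nonneg_right _ (by linarith)
            exact_mod_cast (by omega : m ≤ j)
          have r1 : a m + (m : ℝ) * x = (a m + (m : ℝ) * x₀) + (m : ℝ) * (x - x₀) := by ring
          have r2 : a j + (j : ℝ) * x = (a j + (j : ℝ) * x₀) + (j : ℝ) * (x - x₀) := by ring
          have e5 : a j + (j : ℝ) * x₀ = Pm := hj
          linarith
    · set Px := (Finset.range (d + 1)).sup' Finset.nonempty_range_add_one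
          (fun m => a m + (m : ℝ) * x) with hPx
      have hPxle : ∀ p, p ≤ d → a p + (p : ℝ) * x ≤ Px := by
        intro p hp
        exact Finset.le_sup' (fun m => a m + (m : ℝ) * x)
          (Finset.mem_range.mpr (by omega))
      have tA : ∀ n, n + k ≤ j → (a n - (k : ℝ) * x₀) + (n : ℝ) * x ≤ Px - (k : ℝ) * max x x₀ := by
        intro n hn
        rcases le_total x x₀ with hx | hx
        · rw [max_eq_right hx]
          have := hPxle n (by omega)
          linarith
        · rw [max_eq_left hx]
          have e1 : a n + (n : ℝ) * x₀ ≤ Pm := hPle n (by omega)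
          have e2 : ((n : ℝ) + (k : ℝ)) * (x - x₀) ≤ (j : ℝ) * (x - x₀) := by
            apply mul_le_mul_of_nonneg_right _ (by linarith)
            have : ((n + k : ℕ) : ℝ) ≤ (j : ℝ) := by exact_mod_cast hn
            push_cast at this; linarith
          have e3 := hPxle j hjd
          have e4 : a j + (j : ℝ) * x₀ = Pm := hj
          have r1 : ((n : ℝ) + (k : ℝ)) * (x - x₀) = (n : ℝ) * x + (k : ℝ) * x
              - (n : ℝ) * x₀ - (k : ℝ) * x₀ := by ring
          have r2 : (j : ℝ) * (x - x₀) = (j : ℝ) * x - (j : ℝ) * x₀ := by ring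
          linarith
      have tB : ∀ n, i ≤ n → n + k ≤ d → a (n + k) + (n : ℝ) * x ≤ Px - (k : ℝ) * max x x₀ := by
        intro n hni hnd
        rcases le_total x x₀ with hx | hx
        · rw [max_eq_right hx]
          have e1 : a (n + k) + ((n + k : ℕ) : ℝ) * x₀ ≤ Pm := hPle (n + k) hnd
          have e2 : (n : ℝ) * (x - x₀) ≤ (i : ℝ) * (x - x₀) := by
            apply mul_le_mul_of_nonpos_right _ (by linarith)
            exact_mod_cast hni
          have e3 := hPxle i (by omega)
          have e4 : a i + (i : ℝ) * x₀ = Pm := hi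
          push_cast at e1
          have r1 : (n : ℝ) * (x - x₀) = (n : ℝ) * x - (n : ℝ) * x₀ := by ring
          have r2 : (i : ℝ) * (x - x₀) = (i : ℝ) * x - (i : ℝ) * x₀ := by ring
          linarith
        · rw [max_eq_left hx]
          have := hPxle (n + k) hnd
          push_cast at this
          have r1 : ((n : ℝ) + (k : ℝ)) * x = (n : ℝ) * x + (k : ℝ) * x := by ring
          linarith
      have key : Qx ≤ Px - (k : ℝ) * max x x₀ := by
        apply Finset.sup'_le
        intro m hmr
        have hmdk : m ≤ d - k := by
          have := Finset.mem_range.mp hmr; omega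
        show b m + (m : ℝ) * x ≤ Px - (k : ℝ) * max x x₀
        simp only [hbdef]
        split_ifs with h1 h2
        · rcases max_choice (a m - (k : ℝ) * x₀) (a (m + k)) with h | h <;> rw [h]
          · exact tA m h1
          · exact tB m h2 (by omega)
        · exact tA m h1
        · exact tB m (by omega) (by omega)
      linarith
  · rintro hfac
    obtain ⟨b, hb⟩ := hfac
    set Pm := (Finset.range (d + 1)).sup' Finset.nonempty_range_add_one
        (fun m => a m + (m : ℝ) * x₀) with hPm
    by_cases hT : ∃ m, m ≤ d ∧ a m + (m : ℝ) * x₀ ≠ Pm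
    · -- there is a non-attaining index; use min/max of the attaining set
      set S := (Finset.range (d + 1)).filter (fun m => a m + (m : ℝ) * x₀ = Pm) with hS
      have hSne : S.Nonempty := by
        obtain ⟨m0, hm0, hm0e⟩ := Finset.exists_mem_eq_sup'
          (Finset.nonempty_range_add_one (n := d)) (fun m => a m + (m : ℝ) * x₀)
        exact ⟨m0, Finset.mem_filter.mpr ⟨hm0, hm0e.symm⟩⟩
      set i₀ := S.min' hSne with hi₀
      set j₀ := S.max' hSne with hj₀
      have hi₀S : i₀ ∈ S := S.min'_mem hSne
      have hj₀S : j₀ ∈ S := S.max'_mem hSne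
      have hi₀d : i₀ ≤ d := by
        have := (Finset.mem_filter.mp hi₀S).1; simp only [Finset.mem_range] at this; omega
      have hj₀d : j₀ ≤ d := by
        have := (Finset.mem_filter.mp hj₀S).1; simp only [Finset.mem_range] at this; omega
      have hi₀e : a i₀ + (i₀ : ℝ) * x₀ = Pm := (Finset.mem_filter.mp hi₀S).2
      have hj₀e : a j₀ + (j₀ : ℝ) * x₀ = Pm := (Finset.mem_filter.mp hj₀S).2
      set T := (Finset.range (d + 1)).filter (fun m => a m + (m : ℝ) * x₀ ≠ Pm) with hTdef
      have hTne : T.Nonempty := by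
        obtain ⟨m, hm, hmne⟩ := hT
        exact ⟨m, Finset.mem_filter.mpr ⟨Finset.mem_range.mpr (by omega), hmne⟩⟩
      obtain ⟨δ, hδpos, hTgap⟩ : ∃ δ : ℝ, 0 < δ ∧
          ∀ m, m ≤ d → a m + (m : ℝ) * x₀ ≠ Pm → a m + (m : ℝ) * x₀ ≤ Pm - δ := by
        refine ⟨Pm - T.sup' hTne (fun m => a m + (m : ℝ) * x₀), ?_, ?_⟩
        · have : T.sup' hTne (fun m => a m + (m : ℝ) * x₀) < Pm := by
            rw [Finset.sup'_lt_iff]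
            intro m hm
            have hm1 := Finset.mem_filter.mp hm
            have hle : a m + (m : ℝ) * x₀ ≤ Pm :=
              Finset.le_sup' (fun m => a m + (m : ℝ) * x₀) hm1.1
            exact lt_of_le_of_ne hle hm1.2
          linarith
        · intro m hm hne
          have hmem : m ∈ T := Finset.mem_filter.mpr ⟨Finset.mem_range.mpr (by omega), hne⟩
          have := Finset.le_sup' (f := fun m => a m + (m : ℝ) * x₀) hmem
          linarith
      obtain ⟨t, htpos, hdt⟩ : ∃ t : ℝ, 0 < t ∧ (d : ℝ) * t ≤ δ / 2 := by
        refine ⟨δ / (2 * (d : ℝ) + 2), div_pos hδpos (by positivity), ?_⟩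
        rw [mul_div_assoc', div_le_div_iff₀ (by positivity) (by norm_num : (0:ℝ) < 2)]
        nlinarith [hδpos.le, (Nat.cast_nonneg d : (0:ℝ) ≤ d)]
      -- upper bound for P at x₀ + t
      have hUp : (Finset.range (d + 1)).sup' Finset.nonempty_range_add_one
          (fun m => a m + (m : ℝ) * (x₀ + t)) ≤ Pm + (j₀ : ℝ) * t := by
        apply Finset.sup'_le
        intro m hmr
        have hmd : m ≤ d := by have := Finset.mem_range.mp hmr; omega
        have hr : (m : ℝ) * (x₀ + t) = (m : ℝ) * x₀ + (m : ℝ) * t := by ring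
        by_cases hmS : a m + (m : ℝ) * x₀ = Pm
        · have hmj : m ≤ j₀ := S.le_max' m (Finset.mem_filter.mpr ⟨hmr, hmS⟩)
          have h2 : (m : ℝ) * t ≤ (j₀ : ℝ) * t :=
            mul_le_mul_of_nonneg_right (by exact_mod_cast hmj) htpos.le
          linarith
        · have h1 := hTgap m hmd hmS
          have h2 : (m : ℝ) * t ≤ (d : ℝ) * t :=
            mul_le_mul_of_nonneg_right (by exact_mod_cast hmd) htpos.le
          have h3 : (0 : ℝ) ≤ (j₀ : ℝ) * t := mul_nonneg (Nat.cast_nonneg _) htpos.le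
          linarith
      -- upper bound for P at x₀ - t
      have hDn : (Finset.range (d + 1)).sup' Finset.nonempty_range_add_one
          (fun m => a m + (m : ℝ) * (x₀ - t)) ≤ Pm - (i₀ : ℝ) * t := by
        apply Finset.sup'_le
        intro m hmr
        have hmd : m ≤ d := by have := Finset.mem_range.mp hmr; omega
        have hr : (m : ℝ) * (x₀ - t) = (m : ℝ) * x₀ - (m : ℝ) * t := by ring
        by_cases hmS : a m + (m : ℝ) * x₀ = Pm
        · have hmi : i₀ ≤ m := S.min'_le m (Finset.mem_filter.mpr ⟨hmr, hmS⟩)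
          have h2 : (i₀ : ℝ) * t ≤ (m : ℝ) * t :=
            mul_le_mul_of_nonneg_right (by exact_mod_cast hmi) htpos.le
          linarith
        · have h1 := hTgap m hmd hmS
          have h2 : (i₀ : ℝ) * t ≤ (d : ℝ) * t :=
            mul_le_mul_of_nonneg_right (by exact_mod_cast hi₀d) htpos.le
          have h3 : (0 : ℝ) ≤ (m : ℝ) * t := mul_nonneg (Nat.cast_nonneg _) htpos.le
          linarith
      -- convexity of Q
      set Q : ℝ → ℝ := fun x => (Finset.range (d - k + 1)).sup' Finset.nonempty_range_add_one
          (fun m => b m + (m : ℝ) * x) with hQ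
      have hQconv : 2 * Q x₀ ≤ Q (x₀ + t) + Q (x₀ - t) := by
        have h : Q x₀ ≤ (Q (x₀ + t) + Q (x₀ - t)) / 2 := by
          apply Finset.sup'_le
          intro m hmr
          have h1 : b m + (m : ℝ) * (x₀ + t) ≤ Q (x₀ + t) :=
            Finset.le_sup' (fun m => b m + (m : ℝ) * (x₀ + t)) hmr
          have h2 : b m + (m : ℝ) * (x₀ - t) ≤ Q (x₀ - t) :=
            Finset.le_sup' (fun m => b m + (m : ℝ) * (x₀ - t)) hmr
          linarith
        linarith
      have hb0 := hb x₀
      have hbp := hb (x₀ + t)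
      have hbm := hb (x₀ - t)
      rw [max_self] at hb0
      rw [max_eq_left (by linarith : x₀ ≤ x₀ + t)] at hbp
      rw [max_eq_right (by linarith : x₀ - t ≤ x₀)] at hbm
      have e1 : Pm = (k : ℝ) * x₀ + Q x₀ := hb0
      have e2 : (k : ℝ) * (x₀ + t) + Q (x₀ + t) ≤ Pm + (j₀ : ℝ) * t := by
        rw [← hbp]; exact hUp
      have e3 : (k : ℝ) * x₀ + Q (x₀ - t) ≤ Pm - (i₀ : ℝ) * t := by
        rw [← hbm]; exact hDn
      have hkle : (k : ℝ) * t ≤ ((j₀ : ℝ) - (i₀ : ℝ)) * t := by linarith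
      have hkle2 : (k : ℝ) ≤ (j₀ : ℝ) - (i₀ : ℝ) :=
        le_of_mul_le_mul_right (by linarith [hkle]) htpos
      have hkn : i₀ + k ≤ j₀ := by
        have : ((i₀ + k : ℕ) : ℝ) ≤ (j₀ : ℝ) := by push_cast; linarith
        exact_mod_cast this
      exact ⟨i₀, j₀, by omega, hj₀d, by omega, hi₀e, hj₀e⟩
    · push_neg at hT
      refine ⟨0, d, by omega, le_rfl, by omega, ?_, ?_⟩
      · by_contra h
        exact h (hT 0 (by omega))
      · by_contra h
        exact h (hT d le_rfl)
end

section
/- Tropical Bézout theorem for two lines: let L₁ and L₂ be tropical lines in ℝ², i.e. L_i is the corner locus of max(a_i + x, b_i + y, c_i) for some a_i, b_i, c_i ∈ ℝ. If the intersection L₁ ∩ L₂ is finite, then it consists of exactly one point. -/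
/-- Auxiliary: a set of `ℝ × ℝ` containing `(m - n, y)` for all naturals `n` is infinite. -/
lemma trop_aux_inf_horiz (S : Set (ℝ × ℝ)) (m y : ℝ)
    (h : ∀ n : ℕ, ((m - n : ℝ), y) ∈ S) : S.Infinite := by
  apply Set.infinite_of_injective_forall_mem (f := fun n : ℕ => ((m - n : ℝ), y))
  case hi =>
    intro i j hij
    have h1 : (m - i : ℝ) = m - j := congrArg Prod.fst hij
    have : (i : ℝ) = j := by linarith
    exact_mod_cast this
  case _ => exact h

/-- Auxiliary: a set of `ℝ × ℝ` containing `(x, m - n)` for all naturals `n` is infinite. -/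
lemma trop_aux_inf_vert (S : Set (ℝ × ℝ)) (x m : ℝ)
    (h : ∀ n : ℕ, (x, (m - n : ℝ)) ∈ S) : S.Infinite := by
  apply Set.infinite_of_injective_forall_mem (f := fun n : ℕ => (x, (m - n : ℝ)))
  case hi =>
    intro i j hij
    have h1 : (m - i : ℝ) = m - j := congrArg Prod.snd hij
    have : (i : ℝ) = j := by linarith
    exact_mod_cast this
  case _ => exact h

/-- Auxiliary: a set of `ℝ × ℝ` containing `(m + n, k + n)` for all naturals `n` is infinite. -/
lemma trop_aux_inf_diag (S : Set (ℝ × ℝ)) (m k : ℝ)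
    (h : ∀ n : ℕ, ((m + n : ℝ), (k + n : ℝ)) ∈ S) : S.Infinite := by
  apply Set.infinite_of_injective_forall_mem (f := fun n : ℕ => ((m + n : ℝ), (k + n : ℝ)))
  case hi =>
    intro i j hij
    have h1 : (m + i : ℝ) = m + j := congrArg Prod.fst hij
    have : (i : ℝ) = j := by linarith
    exact_mod_cast this
  case _ => exact h

/-- Tropical Bézout theorem for two lines: if two tropical lines (corner loci of
degree-1 tropical polynomials) intersect in a finite set, then that set consists of
exactly one point. -/
theorem tropical_bezout_two_lines (a₁ b₁ c₁ a₂ b₂ c₂ : ℝ) (L₁ L₂ : Set (ℝ × ℝ))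
    (hL₁ : L₁ = {p : ℝ × ℝ | (a₁ + p.1 = b₁ + p.2 ∧ c₁ ≤ a₁ + p.1) ∨
        (a₁ + p.1 = c₁ ∧ b₁ + p.2 ≤ c₁) ∨ (b₁ + p.2 = c₁ ∧ a₁ + p.1 ≤ c₁)})
    (hL₂ : L₂ = {p : ℝ × ℝ | (a₂ + p.1 = b₂ + p.2 ∧ c₂ ≤ a₂ + p.1) ∨
        (a₂ + p.1 = c₂ ∧ b₂ + p.2 ≤ c₂) ∨ (b₂ + p.2 = c₂ ∧ a₂ + p.1 ≤ c₂)})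
    (hfin : (L₁ ∩ L₂).Finite) :
    ∃ p : ℝ × ℝ, L₁ ∩ L₂ = {p} := by
  subst hL₁ hL₂
  -- vertices: v₁ = (c₁ - a₁, c₁ - b₁), v₂ = (c₂ - a₂, c₂ - b₂)
  -- nondegeneracy: dx ≠ 0
  have hdx : c₂ - a₂ ≠ c₁ - a₁ := by
    intro h
    refine hfin.not_infinite (trop_aux_inf_vert _ (c₁ - a₁) (min (c₁ - b₁) (c₂ - b₂)) ?_) |>.elim
    intro n
    have hn : (0:ℝ) ≤ n := Nat.cast_nonneg n
    have h1 := min_le_left (c₁ - b₁) (c₂ - b₂)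
    have h2 := min_le_right (c₁ - b₁) (c₂ - b₂)
    constructor
    · exact Or.inr (Or.inl ⟨by dsimp only; linarith, by simp only [Set.mem_setOf_eq]; linarith⟩)
    · exact Or.inr (Or.inl ⟨by dsimp only; linarith, by dsimp only; linarith⟩)
  -- dy ≠ 0
  have hdy : c₂ - b₂ ≠ c₁ - b₁ := by
    intro h
    refine hfin.not_infinite (trop_aux_inf_horiz _ (min (c₁ - a₁) (c₂ - a₂)) (c₁ - b₁) ?_) |>.elim
    intro n
    have hn : (0:ℝ) ≤ n := Nat.cast_nonneg n
    have h1 := min_le_left (c₁ - a₁) (c₂ - a₂)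
    have h2 := min_le_right (c₁ - a₁) (c₂ - a₂)
    constructor
    · exact Or.inr (Or.inr ⟨by dsimp only; linarith, by dsimp only; linarith⟩)
    · exact Or.inr (Or.inr ⟨by dsimp only; linarith, by dsimp only; linarith⟩)
  -- dx ≠ dy
  have hdd : (c₂ - a₂) - (c₁ - a₁) ≠ (c₂ - b₂) - (c₁ - b₁) := by
    intro h
    refine hfin.not_infinite (trop_aux_inf_diag _ (max (c₁ - a₁) (c₂ - a₂))
      ((max (c₁ - a₁) (c₂ - a₂)) - (c₁ - a₁) + (c₁ - b₁)) ?_) |>.elim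
    intro n
    have hn : (0:ℝ) ≤ n := Nat.cast_nonneg n
    have h1 := le_max_left (c₁ - a₁) (c₂ - a₂)
    have h2 := le_max_right (c₁ - a₁) (c₂ - a₂)
    constructor
    · exact Or.inl ⟨by dsimp only; linarith, by dsimp only; linarith⟩
    · exact Or.inl ⟨by dsimp only; linarith, by dsimp only; linarith⟩
  -- six regions
  rcases lt_trichotomy (c₂ - a₂) (c₁ - a₁) with hx | hx | hx
  · rcases lt_trichotomy (c₂ - b₂) (c₁ - b₁) with hy | hy | hy
    · -- dx < 0, dy < 0
      rcases lt_trichotomy ((c₂ - a₂) - (c₁ - a₁)) ((c₂ - b₂) - (c₁ - b₁)) with hd | hd | hd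
      · -- dx < dy : p = (x₂ - y₂ + y₁, y₁), W₁ ∩ D₂
        refine ⟨((c₂ - a₂) - (c₂ - b₂) + (c₁ - b₁), c₁ - b₁), ?_⟩
        apply Set.eq_singleton_iff_unique_mem.mpr
        constructor
        · constructor
          · exact Or.inr (Or.inr ⟨by dsimp only; linarith, by dsimp only; linarith⟩)
          · exact Or.inl ⟨by dsimp only; linarith, by dsimp only; linarith⟩
        · rintro ⟨x, y⟩ ⟨h1, h2⟩
          simp only [Set.mem_setOf_eq] at h1 h2
          rcases h1 with ⟨e1, l1⟩ | ⟨e1, l1⟩ | ⟨e1, l1⟩ <;>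
            rcases h2 with ⟨e2, l2⟩ | ⟨e2, l2⟩ | ⟨e2, l2⟩ <;>
            simp only [Prod.mk.injEq] <;> constructor <;> linarith
      · exact absurd hd hdd
      · -- dy < dx : p = (x₁, y₂ - x₂ + x₁), S₁ ∩ D₂
        refine ⟨(c₁ - a₁, (c₂ - b₂) - (c₂ - a₂) + (c₁ - a₁)), ?_⟩
        apply Set.eq_singleton_iff_unique_mem.mpr
        constructor
        · constructor
          · exact Or.inr (Or.inl ⟨by dsimp only; linarith, by dsimp only; linarith⟩)
          · exact Or.inl ⟨by dsimp only; linarith, by dsimp only; linarith⟩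
        · rintro ⟨x, y⟩ ⟨h1, h2⟩
          simp only [Set.mem_setOf_eq] at h1 h2
          rcases h1 with ⟨e1, l1⟩ | ⟨e1, l1⟩ | ⟨e1, l1⟩ <;>
            rcases h2 with ⟨e2, l2⟩ | ⟨e2, l2⟩ | ⟨e2, l2⟩ <;>
            simp only [Prod.mk.injEq] <;> constructor <;> linarith
    · exact absurd hy hdy
    · -- dx < 0, dy > 0 : p = (x₂, y₁), W₁ ∩ S₂
      refine ⟨(c₂ - a₂, c₁ - b₁), ?_⟩
      apply Set.eq_singleton_iff_unique_mem.mpr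
      constructor
      · constructor
        · exact Or.inr (Or.inr ⟨by dsimp only; linarith, by dsimp only; linarith⟩)
        · exact Or.inr (Or.inl ⟨by dsimp only; linarith, by dsimp only; linarith⟩)
      · rintro ⟨x, y⟩ ⟨h1, h2⟩
        simp only [Set.mem_setOf_eq] at h1 h2
        rcases h1 with ⟨e1, l1⟩ | ⟨e1, l1⟩ | ⟨e1, l1⟩ <;>
          rcases h2 with ⟨e2, l2⟩ | ⟨e2, l2⟩ | ⟨e2, l2⟩ <;>
          simp only [Prod.mk.injEq] <;> constructor <;> linarith
  · exact absurd hx hdx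
  · rcases lt_trichotomy (c₂ - b₂) (c₁ - b₁) with hy | hy | hy
    · -- dx > 0, dy < 0 : p = (x₁, y₂), S₁ ∩ W₂
      refine ⟨(c₁ - a₁, c₂ - b₂), ?_⟩
      apply Set.eq_singleton_iff_unique_mem.mpr
      constructor
      · constructor
        · exact Or.inr (Or.inl ⟨by dsimp only; linarith, by dsimp only; linarith⟩)
        · exact Or.inr (Or.inr ⟨by dsimp only; linarith, by dsimp only; linarith⟩)
      · rintro ⟨x, y⟩ ⟨h1, h2⟩
        simp only [Set.mem_setOf_eq] at h1 h2
        rcases h1 with ⟨e1, l1⟩ | ⟨e1, l1⟩ | ⟨e1, l1⟩ <;>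
          rcases h2 with ⟨e2, l2⟩ | ⟨e2, l2⟩ | ⟨e2, l2⟩ <;>
          simp only [Prod.mk.injEq] <;> constructor <;> linarith
    · exact absurd hy hdy
    · -- dx > 0, dy > 0
      rcases lt_trichotomy ((c₂ - a₂) - (c₁ - a₁)) ((c₂ - b₂) - (c₁ - b₁)) with hd | hd | hd
      · -- dx < dy : p = (x₂, y₁ + dx), D₁ ∩ S₂
        refine ⟨(c₂ - a₂, (c₁ - b₁) + (c₂ - a₂) - (c₁ - a₁)), ?_⟩
        apply Set.eq_singleton_iff_unique_mem.mpr
        constructor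
        · constructor
          · exact Or.inl ⟨by dsimp only; linarith, by dsimp only; linarith⟩
          · exact Or.inr (Or.inl ⟨by dsimp only; linarith, by dsimp only; linarith⟩)
        · rintro ⟨x, y⟩ ⟨h1, h2⟩
          simp only [Set.mem_setOf_eq] at h1 h2
          rcases h1 with ⟨e1, l1⟩ | ⟨e1, l1⟩ | ⟨e1, l1⟩ <;>
            rcases h2 with ⟨e2, l2⟩ | ⟨e2, l2⟩ | ⟨e2, l2⟩ <;>
            simp only [Prod.mk.injEq] <;> constructor <;> linarith
      · exact absurd hd hdd
      · -- dy < dx : p = (x₁ + dy, y₂), D₁ ∩ W₂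
        refine ⟨((c₁ - a₁) + (c₂ - b₂) - (c₁ - b₁), c₂ - b₂), ?_⟩
        apply Set.eq_singleton_iff_unique_mem.mpr
        constructor
        · constructor
          · exact Or.inl ⟨by dsimp only; linarith, by dsimp only; linarith⟩
          · exact Or.inr (Or.inr ⟨by dsimp only; linarith, by dsimp only; linarith⟩)
        · rintro ⟨x, y⟩ ⟨h1, h2⟩
          simp only [Set.mem_setOf_eq] at h1 h2
          rcases h1 with ⟨e1, l1⟩ | ⟨e1, l1⟩ | ⟨e1, l1⟩ <;>
            rcases h2 with ⟨e2, l2⟩ | ⟨e2, l2⟩ | ⟨e2, l2⟩ <;>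
            simp only [Prod.mk.injEq] <;> constructor <;> linarith
end

section
/- Every point of the tropical line is a limit of amoeba points of the classical line x − y + 1 = 0 (dequantification of a line, surjectivity direction): let (u, v) ∈ ℝ² be a point where the maximum max(u, v, 0) is attained at least twice. Then there exist functions z, w : (1, ∞) → ℂ with z(t) − w(t) + 1 = 0 and z(t) ≠ 0, w(t) ≠ 0 for all t > 1, such that (log_t |z(t)|, log_t |w(t)|) converges to (u, v) as t → ∞. -/
open Filter

noncomputable def linePt (a b : ℝ) : ℂ :=
  ⟨(b^2 - a^2 - 1)/2, Real.sqrt (a^2 - ((b^2 - a^2 - 1)/2)^2)⟩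

lemma linePt_abs (a b : ℝ) (ha : 0 < a) (hb : 0 < b)
    (h1 : b ≤ a + 1) (h2 : a ≤ b + 1) (h3 : 1 ≤ a + b) :
    ‖linePt a b‖ = a ∧ ‖linePt a b + 1‖ = b := by
  set x := (b^2 - a^2 - 1)/2 with hx
  have hx2 : x^2 ≤ a^2 := by
    rw [hx]
    have hp : 0 ≤ (a + 1 - b) * (a + 1 + b) * (b - a + 1) * (a + b - 1) :=
      mul_nonneg (mul_nonneg (mul_nonneg (by linarith) (by linarith)) (by linarith))
        (by linarith)
    nlinarith [hp]
  set y := Real.sqrt (a^2 - x^2) with hyy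
  have hy : y^2 = a^2 - x^2 := Real.sq_sqrt (by linarith)
  have hre : (linePt a b).re = x := rfl
  have him : (linePt a b).im = y := rfl
  constructor
  · rw [Complex.norm_def, Complex.normSq_apply, hre, him]
    have : x * x + y * y = a^2 := by nlinarith
    rw [this, Real.sqrt_sq ha.le]
  · rw [Complex.norm_def, Complex.normSq_apply]
    have hre1 : (linePt a b + 1).re = x + 1 := by simp [hre]
    have him1 : (linePt a b + 1).im = y := by simp [him]
    rw [hre1, him1]
    have : (x + 1) * (x + 1) + y * y = b^2 := by nlinarith
    rw [this, Real.sqrt_sq hb.le]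

/-- Dequantification of a line, surjectivity direction: every point `(u,v)` of the
tropical line (where the maximum `max u (max v 0)` is attained by at least two of the
terms `u`, `v`, `0`) is the limit of amoeba points of the classical line
`z - w + 1 = 0`: there are points `(z(t), w(t))` on the line with nonzero coordinates
such that `(log_t |z(t)|, log_t |w(t)|) → (u, v)` as `t → ∞`. -/
theorem tropical_line_point_is_amoeba_limit (u v : ℝ)
    (h : (u = v ∧ 0 ≤ u) ∨ (u = 0 ∧ v ≤ 0) ∨ (v = 0 ∧ u ≤ 0)) :
    ∃ z w : ℝ → ℂ,
      (∀ t : ℝ, 1 < t → z t - w t + 1 = 0 ∧ z t ≠ 0 ∧ w t ≠ 0) ∧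
      Tendsto (fun t : ℝ =>
          (Real.logb t ‖z t‖, Real.logb t ‖w t‖))
        atTop (nhds (u, v)) := by
  have key : ∀ t : ℝ, 1 < t →
      ‖linePt (t ^ u) (t ^ v)‖ = t ^ u ∧
      ‖linePt (t ^ u) (t ^ v) + 1‖ = t ^ v := by
    intro t ht
    have ht0 : (0:ℝ) < t := by linarith
    have ha : 0 < t ^ u := Real.rpow_pos_of_pos ht0 u
    have hb : 0 < t ^ v := Real.rpow_pos_of_pos ht0 v
    apply linePt_abs _ _ ha hb
    · rcases h with ⟨huv, hu⟩ | ⟨hu, hv⟩ | ⟨hv, hu⟩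
      · rw [huv]; linarith
      · have : t ^ v ≤ 1 := Real.rpow_le_one_of_one_le_of_nonpos ht.le hv
        linarith
      · rw [hv, Real.rpow_zero]; linarith
    · rcases h with ⟨huv, hu⟩ | ⟨hu, hv⟩ | ⟨hv, hu⟩
      · rw [huv]; linarith
      · rw [hu, Real.rpow_zero]; linarith
      · have : t ^ u ≤ 1 := Real.rpow_le_one_of_one_le_of_nonpos ht.le hu
        linarith
    · rcases h with ⟨huv, hu⟩ | ⟨hu, hv⟩ | ⟨hv, hu⟩
      · rw [huv]
        have : (1:ℝ) ≤ t ^ v := Real.one_le_rpow ht.le (by linarith [huv ▸ hu])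
        linarith
      · rw [hu, Real.rpow_zero]; linarith
      · rw [hv, Real.rpow_zero]; linarith
  refine ⟨fun t => linePt (t ^ u) (t ^ v), fun t => linePt (t ^ u) (t ^ v) + 1, ?_, ?_⟩
  · intro t ht
    obtain ⟨h1, h2⟩ := key t ht
    refine ⟨by ring, ?_, ?_⟩
    · intro hz
      have hz' : linePt (t ^ u) (t ^ v) = 0 := hz
      rw [hz', norm_zero] at h1
      exact absurd h1.symm (ne_of_gt (Real.rpow_pos_of_pos (lt_trans zero_lt_one ht) u))
    · intro hw
      have hw' : linePt (t ^ u) (t ^ v) + 1 = 0 := hw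
      rw [hw', norm_zero] at h2
      exact absurd h2.symm (ne_of_gt (Real.rpow_pos_of_pos (lt_trans zero_lt_one ht) v))
  · have hc : Tendsto (fun _ : ℝ => (u, v)) atTop (nhds (u, v)) := tendsto_const_nhds
    refine Tendsto.congr' ?_ hc
    filter_upwards [eventually_gt_atTop 1] with t ht
    obtain ⟨h1, h2⟩ := key t ht
    have ht0 : (0:ℝ) < t := by linarith
    rw [h1, h2, Real.logb_rpow ht0 (ne_of_gt ht), Real.logb_rpow ht0 (ne_of_gt ht)]
end

section
/- A tropical curve of degree d has at most d² vertices: let d ≥ 1 and let a : {(i,j) ∈ ℤ≥0 × ℤ≥0 : i + j ≤ d} → ℝ, defining the tropical polynomial P(x,y) = max_{i+j≤d}(a(i,j) + i·x + j·y). For p ∈ ℝ², let S(p) = {(i,j) : i + j ≤ d and a(i,j) + i·p₁ + j·p₂ = P(p)} be the set of exponents attaining the maximum at p. Then the set of points p ∈ ℝ² for which S(p) contains three affinely independent points (i.e., is not contained in an affine line) is finite and has cardinality at most d². -/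
/-- The support of a tropical polynomial of degree `d` in two variables: the lattice
points `(i,j)` with `i + j ≤ d`. -/
def tropSupport (d : ℕ) : Finset (ℕ × ℕ) :=
  (Finset.range (d + 1) ×ˢ Finset.range (d + 1)).filter fun m => m.1 + m.2 ≤ d

theorem tropSupport_nonempty (d : ℕ) : (tropSupport d).Nonempty :=
  ⟨(0, 0), by simp [tropSupport]⟩

/-- The tropical polynomial `P(x,y) = max_{i+j≤d} (a(i,j) + i·x + j·y)`. -/
noncomputable def tropPoly (d : ℕ) (a : ℕ × ℕ → ℝ) (p : ℝ × ℝ) : ℝ :=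
  (tropSupport d).sup' (tropSupport_nonempty d)
    fun m => a m + (m.1 : ℝ) * p.1 + (m.2 : ℝ) * p.2

/-- The vertices of the tropical curve defined by `tropPoly d a`: the points `p`
where the set `S(p)` of exponents attaining the maximum contains three affinely
independent points (i.e. is not contained in an affine line). -/
def tropVertices (d : ℕ) (a : ℕ × ℕ → ℝ) : Set (ℝ × ℝ) :=
  {p | ∃ m₁ ∈ tropSupport d, ∃ m₂ ∈ tropSupport d, ∃ m₃ ∈ tropSupport d,
    a m₁ + (m₁.1 : ℝ) * p.1 + (m₁.2 : ℝ) * p.2 = tropPoly d a p ∧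
    a m₂ + (m₂.1 : ℝ) * p.1 + (m₂.2 : ℝ) * p.2 = tropPoly d a p ∧
    a m₃ + (m₃.1 : ℝ) * p.1 + (m₃.2 : ℝ) * p.2 = tropPoly d a p ∧
    AffineIndependent ℝ ![((m₁.1 : ℝ), (m₁.2 : ℝ)), ((m₂.1 : ℝ), (m₂.2 : ℝ)),
      ((m₃.1 : ℝ), (m₃.2 : ℝ))]}

open MeasureTheory Set ENNReal

noncomputable section
namespace TropAux

/-- The standard triangle with vertices `(0,0)`, `(1,0)`, `(0,1)`. -/
def stdTri : Set (ℝ × ℝ) := convexHull ℝ {((0:ℝ),(0:ℝ)), (1,0), (0,1)}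

/-- Twice the signed area of the triangle `u v w`. -/
def tdet (u v w : ℝ × ℝ) : ℝ := (v.1 - u.1) * (w.2 - u.2) - (v.2 - u.2) * (w.1 - u.1)

lemma combo_mem {u v w : ℝ × ℝ} {α β γ : ℝ} (hα : 0 ≤ α) (hβ : 0 ≤ β) (hγ : 0 ≤ γ)
    (h : α + β + γ = 1) : α • u + β • v + γ • w ∈ convexHull ℝ {u, v, w} := by
  have hc : Convex ℝ (convexHull ℝ {u, v, w}) := convex_convexHull _ _
  have := hc.sum_mem (t := Finset.univ (α := Fin 3)) (w := ![α, β, γ]) (z := ![u, v, w])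
    (by intro i _; fin_cases i <;> simpa) (by simp [Fin.sum_univ_three]; linarith)
    (by intro i _; fin_cases i <;> exact subset_convexHull _ _ (by simp))
  simpa [Fin.sum_univ_three] using this

/-- The linear map sending the standard triangle to the triangle `u v w` (up to
the translation by `u`). -/
def lmap (u v w : ℝ × ℝ) : (ℝ × ℝ) →ₗ[ℝ] (ℝ × ℝ) :=
  (LinearMap.fst ℝ ℝ ℝ).smulRight (v - u) + (LinearMap.snd ℝ ℝ ℝ).smulRight (w - u)

lemma lmap_apply (u v w : ℝ × ℝ) (x : ℝ × ℝ) :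
    lmap u v w x = x.1 • (v - u) + x.2 • (w - u) := rfl

lemma lmap_det (u v w : ℝ × ℝ) : (lmap u v w).det = tdet u v w := by
  rw [← LinearMap.det_toMatrix (Module.Basis.finTwoProd ℝ), Matrix.det_fin_two]
  simp [LinearMap.toMatrix_apply, lmap_apply, Module.Basis.finTwoProd_zero, Module.Basis.finTwoProd_one,
    Module.Basis.coe_finTwoProd_repr, tdet, Prod.fst_sub, Prod.snd_sub]
  ring

lemma tri_image (u v w : ℝ × ℝ) :
    convexHull ℝ {u, v, w} = (fun x => u + x) '' (lmap u v w '' stdTri) := by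
  have : (fun x => u + x) '' (lmap u v w '' stdTri)
      = ((AffineMap.const ℝ (ℝ × ℝ) u + (lmap u v w).toAffineMap) '' stdTri) := by
    rw [Set.image_image]; rfl
  rw [this, stdTri, AffineMap.image_convexHull]
  congr 1
  simp only [Set.image_insert_eq, Set.image_singleton]
  norm_num [lmap_apply, Prod.ext_iff]

/-- The area of a triangle, in terms of the standard one. -/
lemma tri_volume (u v w : ℝ × ℝ) :
    volume (convexHull ℝ {u, v, w}) = ENNReal.ofReal |tdet u v w| * volume stdTri := by
  rw [tri_image, Set.image_add_left, measure_preimage_add,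
    Measure.addHaar_image_linearMap, lmap_det]

lemma stdTri_vol_pos : 0 < volume stdTri := by
  have hsub : Icc (0:ℝ) (1/2) ×ˢ Icc (0:ℝ) (1/2) ⊆ stdTri := by
    rintro ⟨x, y⟩ ⟨⟨hx0, hx1⟩, ⟨hy0, hy1⟩⟩
    have := combo_mem (u := ((0:ℝ),(0:ℝ))) (v := (1,0)) (w := (0,1))
      (α := 1 - x - y) (β := x) (γ := y) (by linarith) hx0 hy0 (by ring)
    simpa [stdTri, Prod.ext_iff] using this
  have : (0:ℝ≥0∞) < volume (Icc (0:ℝ) (1/2) ×ˢ Icc (0:ℝ) (1/2)) := by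
    rw [Measure.volume_eq_prod, Measure.prod_prod, Real.volume_Icc]
    norm_num
  exact lt_of_lt_of_le this (measure_mono hsub)

lemma stdTri_vol_lt_top : volume stdTri < ⊤ :=
  ((Set.toFinite _).isCompact_convexHull ℝ).measure_lt_top

/-- A line in the plane is a null set. -/
lemma line_null (c₁ c₂ c : ℝ) (h : c₁ ≠ 0 ∨ c₂ ≠ 0) :
    volume {x : ℝ × ℝ | c₁ * x.1 + c₂ * x.2 = c} = 0 := by
  set g : (ℝ × ℝ) →ₗ[ℝ] ℝ := c₁ • LinearMap.fst ℝ ℝ ℝ + c₂ • LinearMap.snd ℝ ℝ ℝ with hg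
  have hgapp : ∀ x : ℝ × ℝ, g x = c₁ * x.1 + c₂ * x.2 := by
    intro x; simp [hg, smul_eq_mul]
  obtain ⟨x₀, hx₀⟩ : ∃ x₀ : ℝ × ℝ, g x₀ = c := by
    rcases h with h1 | h2
    · exact ⟨(c / c₁, 0), by rw [hgapp]; field_simp; simp⟩
    · exact ⟨(0, c / c₂), by rw [hgapp]; field_simp; simp⟩
  have hker : (LinearMap.ker g : Set (ℝ × ℝ)) ≠ univ := by
    intro hK
    have : (c₁, c₂) ∈ (LinearMap.ker g : Set (ℝ × ℝ)) := hK ▸ mem_univ _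
    have h0 : c₁ * c₁ + c₂ * c₂ = 0 := by
      have := (LinearMap.mem_ker.mp this); rwa [hgapp] at this
    rcases h with h1 | h2
    · nlinarith [mul_self_pos.mpr h1, mul_self_nonneg c₂]
    · nlinarith [mul_self_pos.mpr h2, mul_self_nonneg c₁]
  have hset : {x : ℝ × ℝ | c₁ * x.1 + c₂ * x.2 = c}
      = (fun y => x₀ + y) '' (LinearMap.ker g : Set (ℝ × ℝ)) := by
    ext x
    simp only [mem_setOf_eq, mem_image, SetLike.mem_coe, LinearMap.mem_ker]
    constructor
    · intro hx
      refine ⟨x - x₀, ?_, by abel⟩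
      rw [map_sub, hx₀, hgapp, hx, sub_self]
    · rintro ⟨y, hy, rfl⟩
      have := hgapp (x₀ + y)
      rw [map_add, hx₀, hy, add_zero] at this
      linarith [this]
  rw [hset, Set.image_add_left, measure_preimage_add]
  refine Measure.addHaar_submodule volume _ ?_
  intro hK
  exact hker (by rw [hK]; rfl)

lemma hull_subset_halfspace {c₁ c₂ c : ℝ} {u v w : ℝ × ℝ}
    (hu : c₁ * u.1 + c₂ * u.2 ≤ c) (hv : c₁ * v.1 + c₂ * v.2 ≤ c)
    (hw : c₁ * w.1 + c₂ * w.2 ≤ c) :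
    convexHull ℝ {u, v, w} ⊆ {x : ℝ × ℝ | c₁ * x.1 + c₂ * x.2 ≤ c} := by
  have hlin : IsLinearMap ℝ (fun x : ℝ × ℝ => c₁ * x.1 + c₂ * x.2) := by
    constructor
    · intro x y; simp [Prod.fst_add, Prod.snd_add]; ring
    · intro r x; simp [Prod.smul_fst, Prod.smul_snd, smul_eq_mul]; ring
  exact convexHull_min (by simp [Set.insert_subset_iff, hu, hv, hw])
    (convex_halfSpace_le hlin c)

lemma tdet_ne_zero {u v w : ℝ × ℝ} (h : AffineIndependent ℝ ![u, v, w]) :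
    tdet u v w ≠ 0 := by
  intro hdet
  have hd : (v - u).1 * (w - u).2 - (v - u).2 * (w - u).1 = 0 := by
    simpa [tdet, Prod.fst_sub, Prod.snd_sub] using hdet
  have key : ∀ s t : ℝ, s • (v - u) + t • (w - u) = 0 → s = 0 ∧ t = 0 := by
    intro s t hst
    have h0 := affineIndependent_iff.mp h Finset.univ ![-s - t, s, t]
      (by simp [Fin.sum_univ_three]; ring)
      (by
        simp only [Fin.sum_univ_three, Matrix.cons_val_zero, Matrix.cons_val_one,
          Matrix.head_cons, Matrix.cons_val_two, Matrix.tail_cons]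
        have : (-s - t) • u + s • v + t • w = s • (v - u) + t • (w - u) := by module
        rw [this, hst])
    exact ⟨by simpa using h0 1 (Finset.mem_univ _), by simpa using h0 2 (Finset.mem_univ _)⟩
  set A := v - u with hA
  set B := w - u with hB
  by_cases h2 : A.2 = 0 ∧ B.2 = 0
  · by_cases h1 : A.1 = 0 ∧ B.1 = 0
    · have := key 1 0 (by
        have : A = 0 := Prod.ext h1.1 h2.1
        simp [← hA, ← hB, this])
      exact one_ne_zero this.1
    · have hk := key B.1 (-A.1) (by
        apply Prod.ext
        · simp only [Prod.fst_add, Prod.smul_fst, smul_eq_mul, Prod.fst_zero]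
          nlinarith [hd]
        · simp only [Prod.snd_add, Prod.smul_snd, smul_eq_mul, Prod.snd_zero, h2.1, h2.2]
          ring)
      exact h1 ⟨by simpa using hk.2, hk.1⟩
  · have hk := key B.2 (-A.2) (by
      apply Prod.ext
      · simp only [Prod.fst_add, Prod.smul_fst, smul_eq_mul, Prod.fst_zero]
        nlinarith [hd]
      · simp only [Prod.snd_add, Prod.smul_snd, smul_eq_mul, Prod.snd_zero]
        ring)
    exact h2 ⟨by simpa using hk.2, hk.1⟩

/-- The determinant of three affinely independent lattice points has absolute value at
least one. -/
lemma one_le_abs_tdet {m₁ m₂ m₃ : ℕ × ℕ}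
    (h : AffineIndependent ℝ ![((m₁.1:ℝ), (m₁.2:ℝ)), ((m₂.1:ℝ), (m₂.2:ℝ)),
      ((m₃.1:ℝ), (m₃.2:ℝ))]) :
    1 ≤ |tdet ((m₁.1:ℝ), (m₁.2:ℝ)) ((m₂.1:ℝ), (m₂.2:ℝ)) ((m₃.1:ℝ), (m₃.2:ℝ))| := by
  set z : ℤ := ((m₂.1:ℤ) - m₁.1) * ((m₃.2:ℤ) - m₁.2) - ((m₂.2:ℤ) - m₁.2) * ((m₃.1:ℤ) - m₁.1)
    with hz
  have hcast : tdet ((m₁.1:ℝ), (m₁.2:ℝ)) ((m₂.1:ℝ), (m₂.2:ℝ)) ((m₃.1:ℝ), (m₃.2:ℝ)) = (z:ℝ) := by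
    simp only [tdet, hz]; push_cast; ring
  have hne := tdet_ne_zero h
  have hzne : z ≠ 0 := by
    intro h0; apply hne; rw [hcast, h0]; simp
  rw [hcast, ← Int.cast_abs]
  exact_mod_cast Int.one_le_abs hzne

/-- The triangle with vertices `(0,0)`, `(d,0)`, `(0,d)` dual to the degree-`d` tropical
polynomial. -/
def bigTri (d : ℕ) : Set (ℝ × ℝ) := convexHull ℝ {((0:ℝ),(0:ℝ)), ((d:ℝ),0), (0,(d:ℝ))}

lemma mem_bigTri {d : ℕ} (hd : 1 ≤ d) {i j : ℕ} (hm : i + j ≤ d) :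
    ((i:ℝ), (j:ℝ)) ∈ bigTri d := by
  have hdpos : (0:ℝ) < d := by exact_mod_cast hd
  have hsum : (i:ℝ) + j ≤ d := by exact_mod_cast hm
  have := combo_mem (u := ((0:ℝ),(0:ℝ))) (v := ((d:ℝ),0)) (w := (0,(d:ℝ)))
    (α := 1 - i/d - j/d) (β := i/d) (γ := j/d)
    (by rw [sub_sub, sub_nonneg, ← add_div, div_le_one hdpos]; exact hsum)
    (by positivity) (by positivity) (by ring)
  have heq : (1 - (i:ℝ)/d - (j:ℝ)/d) • ((0:ℝ),(0:ℝ)) + ((i:ℝ)/d) • ((d:ℝ),0)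
      + ((j:ℝ)/d) • (0,(d:ℝ)) = ((i:ℝ), (j:ℝ)) := by
    have hd0 : (d:ℝ) ≠ 0 := ne_of_gt hdpos
    simp only [Prod.ext_iff, Prod.fst_add, Prod.snd_add, Prod.smul_fst, Prod.smul_snd,
      smul_eq_mul, mul_zero, mul_one]
    constructor <;> field_simp <;> ring
  rw [heq] at this
  exact this

lemma le_tropPoly (d : ℕ) (a : ℕ × ℕ → ℝ) {m : ℕ × ℕ} (hm : m ∈ tropSupport d) (q : ℝ × ℝ) :
    a m + (m.1:ℝ) * q.1 + (m.2:ℝ) * q.2 ≤ tropPoly d a q := by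
  unfold tropPoly
  exact Finset.le_sup' (fun m => a m + (m.1 : ℝ) * q.1 + (m.2 : ℝ) * q.2) hm

lemma mem_tropSupport {d : ℕ} {m : ℕ × ℕ} (hm : m ∈ tropSupport d) : m.1 + m.2 ≤ d := by
  simp only [tropSupport, Finset.mem_filter] at hm
  exact hm.2

/-- The key counting bound: any finite set of vertices has at most `d²` elements. -/
lemma card_le (d : ℕ) (hd : 1 ≤ d) (a : ℕ × ℕ → ℝ) (F : Finset (ℝ × ℝ))
    (hF : ↑F ⊆ tropVertices d a) : F.card ≤ d ^ 2 := by
  classical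
  have hw : ∀ p ∈ F, ∃ t : (ℕ×ℕ) × (ℕ×ℕ) × (ℕ×ℕ),
      t.1 ∈ tropSupport d ∧ t.2.1 ∈ tropSupport d ∧ t.2.2 ∈ tropSupport d ∧
      a t.1 + (t.1.1:ℝ) * p.1 + (t.1.2:ℝ) * p.2 = tropPoly d a p ∧
      a t.2.1 + (t.2.1.1:ℝ) * p.1 + (t.2.1.2:ℝ) * p.2 = tropPoly d a p ∧
      a t.2.2 + (t.2.2.1:ℝ) * p.1 + (t.2.2.2:ℝ) * p.2 = tropPoly d a p ∧
      AffineIndependent ℝ ![((t.1.1:ℝ),(t.1.2:ℝ)), ((t.2.1.1:ℝ),(t.2.1.2:ℝ)),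
        ((t.2.2.1:ℝ),(t.2.2.2:ℝ))] := by
    intro p hp
    obtain ⟨m₁, h₁, m₂, h₂, m₃, h₃, e₁, e₂, e₃, hind⟩ := hF hp
    exact ⟨(m₁, m₂, m₃), h₁, h₂, h₃, e₁, e₂, e₃, hind⟩
  choose t ht using hw
  let pt : ℕ × ℕ → ℝ × ℝ := fun m => ((m.1:ℝ), (m.2:ℝ))
  let T : {p // p ∈ F} → Set (ℝ × ℝ) := fun x =>
    convexHull ℝ {pt (t x.1 x.2).1, pt (t x.1 x.2).2.1, pt (t x.1 x.2).2.2}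
  have hTsub : ∀ x : {p // p ∈ F}, T x ⊆ bigTri d := by
    intro x
    obtain ⟨hs₁, hs₂, hs₃, -⟩ := ht x.1 x.2
    refine convexHull_min ?_ (convex_convexHull _ _)
    simp only [Set.insert_subset_iff, Set.singleton_subset_iff]
    exact ⟨mem_bigTri hd (mem_tropSupport hs₁), mem_bigTri hd (mem_tropSupport hs₂),
      mem_bigTri hd (mem_tropSupport hs₃)⟩
  have hTvol : ∀ x : {p // p ∈ F}, volume stdTri ≤ volume (T x) := by
    intro x
    obtain ⟨-, -, -, -, -, -, hind⟩ := ht x.1 x.2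
    rw [show T x = convexHull ℝ {pt (t x.1 x.2).1, pt (t x.1 x.2).2.1, pt (t x.1 x.2).2.2}
      from rfl, tri_volume]
    calc volume stdTri = 1 * volume stdTri := (one_mul _).symm
      _ ≤ _ := by
          gcongr
          exact ENNReal.one_le_ofReal.mpr (one_le_abs_tdet hind)
  have hmeas : ∀ x : {p // p ∈ F}, NullMeasurableSet (T x) volume := fun x =>
    ((Set.toFinite _).isCompact_convexHull ℝ).isClosed.measurableSet.nullMeasurableSet
  have hdisj : (↑F.attach : Set {p // p ∈ F}).Pairwise (Function.onFun (AEDisjoint volume) T) := by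
    intro x _ y _ hxy
    have hpq : x.1 ≠ y.1 := fun h => hxy (Subtype.ext h)
    set p := x.1 with hp
    set q := y.1 with hq
    set c₁ := q.1 - p.1 with hc₁
    set c₂ := q.2 - p.2 with hc₂
    set c := tropPoly d a q - tropPoly d a p with hc
    have hcne : c₁ ≠ 0 ∨ c₂ ≠ 0 := by
      by_contra hcon
      push_neg at hcon
      exact hpq (Prod.ext (by simp [hc₁] at hcon; linarith [hcon.1])
        (by simp [hc₂] at hcon; linarith [hcon.2]))
    have hhalf : ∀ m : ℕ × ℕ, m ∈ tropSupport d →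
        a m + (m.1:ℝ) * p.1 + (m.2:ℝ) * p.2 = tropPoly d a p →
        c₁ * (pt m).1 + c₂ * (pt m).2 ≤ c := by
      intro m hm he
      have hle := le_tropPoly d a hm q
      have : c₁ * (pt m).1 + c₂ * (pt m).2
          = (a m + (m.1:ℝ) * q.1 + (m.2:ℝ) * q.2) - (a m + (m.1:ℝ) * p.1 + (m.2:ℝ) * p.2) := by
        simp only [hc₁, hc₂, pt]; ring
      rw [this, he]
      linarith
    have hhalf' : ∀ m : ℕ × ℕ, m ∈ tropSupport d →
        a m + (m.1:ℝ) * q.1 + (m.2:ℝ) * q.2 = tropPoly d a q →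
        (-c₁) * (pt m).1 + (-c₂) * (pt m).2 ≤ -c := by
      intro m hm he
      have hle := le_tropPoly d a hm p
      have : (-c₁) * (pt m).1 + (-c₂) * (pt m).2
          = (a m + (m.1:ℝ) * p.1 + (m.2:ℝ) * p.2) - (a m + (m.1:ℝ) * q.1 + (m.2:ℝ) * q.2) := by
        simp only [hc₁, hc₂, pt]; ring
      rw [this, he]
      simp only [hc]
      linarith
    obtain ⟨hs₁, hs₂, hs₃, he₁, he₂, he₃, -⟩ := ht x.1 x.2
    obtain ⟨hs₁', hs₂', hs₃', he₁', he₂', he₃', -⟩ := ht y.1 y.2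
    have h1 : T x ⊆ {z : ℝ × ℝ | c₁ * z.1 + c₂ * z.2 ≤ c} :=
      hull_subset_halfspace (hhalf _ hs₁ he₁) (hhalf _ hs₂ he₂) (hhalf _ hs₃ he₃)
    have h2 : T y ⊆ {z : ℝ × ℝ | (-c₁) * z.1 + (-c₂) * z.2 ≤ -c} :=
      hull_subset_halfspace (hhalf' _ hs₁' he₁') (hhalf' _ hs₂' he₂') (hhalf' _ hs₃' he₃')
    refine measure_mono_null ?_ (line_null c₁ c₂ c hcne)
    rintro z ⟨hz1, hz2⟩
    have := h1 hz1
    have := h2 hz2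
    simp only [mem_setOf_eq] at *
    linarith
  have hsum := measure_biUnion_finset₀ hdisj (fun b _ => hmeas b)
  have hUsub : (⋃ x ∈ F.attach, T x) ⊆ bigTri d := iUnion₂_subset fun x _ => hTsub x
  have hbig : volume (bigTri d) = ENNReal.ofReal ((d:ℝ)^2) * volume stdTri := by
    rw [bigTri, tri_volume]
    congr 2
    have htd : tdet ((0:ℝ),(0:ℝ)) ((d:ℝ),0) (0,(d:ℝ)) = (d:ℝ)^2 := by
      simp only [tdet]
      norm_num
      ring
    rw [htd, abs_of_nonneg (by positivity)]
  have hchain : (F.card : ℝ≥0∞) * volume stdTri ≤ ENNReal.ofReal ((d:ℝ)^2) * volume stdTri := by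
    calc (F.card : ℝ≥0∞) * volume stdTri = F.attach.card • volume stdTri := by
          rw [Finset.card_attach, nsmul_eq_mul]
      _ ≤ ∑ x ∈ F.attach, volume (T x) :=
          Finset.card_nsmul_le_sum _ _ _ (fun x _ => hTvol x)
      _ = volume (⋃ x ∈ F.attach, T x) := hsum.symm
      _ ≤ volume (bigTri d) := measure_mono hUsub
      _ = _ := hbig
  have hcard : (F.card : ℝ≥0∞) ≤ ENNReal.ofReal ((d:ℝ)^2) :=
    (ENNReal.mul_le_mul_iff_left (ne_of_gt stdTri_vol_pos) (ne_of_lt stdTri_vol_lt_top)).mp hchain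
  have : (F.card : ℝ≥0∞) ≤ ((d^2 : ℕ) : ℝ≥0∞) := by
    rwa [show ((d:ℝ)^2) = ((d^2 : ℕ) : ℝ) by push_cast; ring, ENNReal.ofReal_natCast] at hcard
  exact_mod_cast this

end TropAux
end

/-- A tropical curve of degree `d` has at most `d²` vertices. -/
theorem tropical_curve_vertices_card_le (d : ℕ) (hd : 1 ≤ d) (a : ℕ × ℕ → ℝ) :
    (tropVertices d a).Finite ∧ (tropVertices d a).ncard ≤ d ^ 2 := by
  have key := TropAux.card_le d hd a
  have hfin : (tropVertices d a).Finite := by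
    rw [← Set.not_infinite]
    intro hinf
    obtain ⟨F, hsub, hcard⟩ := hinf.exists_subset_card_eq (d ^ 2 + 1)
    have := key F hsub
    omega
  refine ⟨hfin, ?_⟩
  rw [Set.ncard_eq_toFinset_card _ hfin]
  exact key _ (by simp)
end
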